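/- arXiv:2210.06299 — 3 statements merged into one kernel-verified Lean document; each statement's English description precedes it below -/
import Mathlib

section
/- There is a linear bijection (rearrangement map) R from ℝ^{(a₁b₁)×(a₂b₂)} to ℝ^{(a₁a₂)×(b₁b₂)} such that for all A ∈ ℝ^{a₁×a₂} and B ∈ ℝ^{b₁×b₂}, R(A ⊗ B) = vec(A) · vec(B)ᵀ, and R preserves Frobenius norms. -/
open Kronecker Matrix

/-- Frobenius norm of a real matrix. -/
noncomputable def frobNorm {m n : Type*} [Fintype m] [Fintype n] (M : Matrix m n ℝ) : ℝ :=
  Real.sqrt (∑ i, ∑ j, (M i j) ^ 2)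

/-- There is a linear bijection (rearrangement map) `R : ℝ^{(a₁b₁)×(a₂b₂)} → ℝ^{(a₁a₂)×(b₁b₂)}`
with `R(A ⊗ B) = vec(A) vec(B)ᵀ` for all `A, B`, and `R` preserves Frobenius norms. -/
theorem exists_rearrangement_map (a₁ a₂ b₁ b₂ : ℕ) :
    ∃ R : Matrix (Fin a₁ × Fin b₁) (Fin a₂ × Fin b₂) ℝ ≃ₗ[ℝ]
          Matrix (Fin a₁ × Fin a₂) (Fin b₁ × Fin b₂) ℝ,
      (∀ (A : Matrix (Fin a₁) (Fin a₂) ℝ) (B : Matrix (Fin b₁) (Fin b₂) ℝ),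
        R (A ⊗ₖ B) = fun p q => A p.1 p.2 * B q.1 q.2) ∧
      (∀ W, frobNorm (R W) = frobNorm W) := by
  refine ⟨{ toFun := fun W p q => W (p.1, q.1) (p.2, q.2)
            invFun := fun M p q => M (p.1, q.1) (p.2, q.2)
            map_add' := fun W₁ W₂ => rfl
            map_smul' := fun c W => rfl
            left_inv := fun W => rfl
            right_inv := fun M => rfl }, ?_, ?_⟩
  · intro A B
    funext p q
    rfl
  · intro W
    unfold frobNorm
    congr 1
    show (∑ i : Fin a₁ × Fin a₂, ∑ j : Fin b₁ × Fin b₂,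
        (W (i.1, j.1) (i.2, j.2)) ^ 2) =
        ∑ i : Fin a₁ × Fin b₁, ∑ j : Fin a₂ × Fin b₂, (W i j) ^ 2
    rw [Fintype.sum_prod_type, Fintype.sum_prod_type]
    simp_rw [Fintype.sum_prod_type]
    exact Finset.sum_congr rfl fun i₁ _ => Finset.sum_comm
end

section
/- For any matrix W ∈ ℝ^{(a₁b₁)×(a₂b₂)} and any R̂ ≥ 1, the minimum over factor matrices {A_r}, {B_r} of ‖W − Σ_{r=1}^{R̂} A_r ⊗ B_r‖²_F equals the sum of the squared singular values of the rearranged matrix R(W) beyond index R̂, i.e., Σ_{r>R̂} σ_r(R(W))². -/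
open Kronecker Matrix Finset

/-- Squared Frobenius norm of a real matrix. -/
def frobSq {m n : Type*} [Fintype m] [Fintype n] (M : Matrix m n ℝ) : ℝ :=
  ∑ i, ∑ j, (M i j) ^ 2

/-- The Van Loan–Pitsianis rearrangement sending `A ⊗ B` to `vec(A) vec(B)ᵀ`. -/
def rearrange {a₁ a₂ b₁ b₂ : ℕ}
    (W : Matrix (Fin a₁ × Fin b₁) (Fin a₂ × Fin b₂) ℝ) :
    Matrix (Fin a₁ × Fin a₂) (Fin b₁ × Fin b₂) ℝ :=
  fun p q => W (p.1, q.1) (p.2, q.2)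

/-- `Σ_{r ≥ R̂} σ_r(M)²` : the sum of the squared singular values of `M` beyond index `R̂`
(zero-based), i.e. the tail of the decreasingly sorted eigenvalues of `MᴴM`. -/
noncomputable def tailSqSingular {p q : ℕ} (M : Matrix (Fin p) (Fin q) ℝ) (Rhat : ℕ) : ℝ :=
  let ev : Fin q → ℝ := (Matrix.isHermitian_conjTranspose_mul_self M).eigenvalues
  ∑ r ∈ Finset.univ.filter (fun r : Fin q => Rhat ≤ (r : ℕ)), ev (Tuple.sort ev r.rev)

/- ===== basic helpers ===== -/
lemma frobSq_eq_trace {m n : Type*} [Fintype m] [Fintype n] (C : Matrix m n ℝ) :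
    frobSq C = Matrix.trace (Cᴴ * C) := by
  unfold frobSq
  rw [Matrix.trace, Finset.sum_comm]
  simp [Matrix.mul_apply, Matrix.diag, Matrix.conjTranspose_apply, sq]

lemma frobSq_nonneg {m n : Type*} [Fintype m] [Fintype n] (C : Matrix m n ℝ) :
    0 ≤ frobSq C :=
  Finset.sum_nonneg fun _ _ => Finset.sum_nonneg fun _ _ => sq_nonneg _

lemma trace_mul_vecMulVec {m n : Type*} [Fintype m] [Fintype n]
    (H : Matrix n m ℝ) (a : m → ℝ) (b : n → ℝ) :
    Matrix.trace (H * Matrix.vecMulVec a b) = b ⬝ᵥ (H *ᵥ a) := by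
  simp only [Matrix.trace, Matrix.diag, Matrix.mul_apply, Matrix.vecMulVec_apply,
    dotProduct, Matrix.mulVec, Finset.mul_sum]
  refine Finset.sum_congr rfl fun i _ => Finset.sum_congr rfl fun j _ => ?_
  ring

lemma dot_mulVec_mulVec {p q : Type*} [Fintype p] [Fintype q] (M : Matrix p q ℝ) (x y : q → ℝ) :
    (M *ᵥ x) ⬝ᵥ (M *ᵥ y) = x ⬝ᵥ ((Mᴴ * M) *ᵥ y) := by
  rw [← Matrix.mulVec_mulVec, Matrix.dotProduct_mulVec x, Matrix.vecMul_conjTranspose]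
  simp

lemma vecMulVec_mulVec {m n : Type*} [Fintype n] (a : m → ℝ) (b : n → ℝ) (x : n → ℝ) :
    Matrix.vecMulVec a b *ᵥ x = (b ⬝ᵥ x) • a := by
  ext i
  simp only [Matrix.mulVec, Matrix.vecMulVec_apply, dotProduct, Pi.smul_apply,
    smul_eq_mul, Finset.sum_mul]
  refine Finset.sum_congr rfl fun j _ => by ring

lemma vecMulVec_conjT {m n : Type*} (a : m → ℝ) (b : n → ℝ) :
    (Matrix.vecMulVec a b)ᴴ = Matrix.vecMulVec b a := by
  ext i j
  simp [Matrix.vecMulVec_apply, Matrix.conjTranspose_apply, mul_comm]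

/- ===== projection lemmas ===== -/
section Proj
variable {m n : Type*} [Fintype m] [Fintype n] [DecidableEq n]
variable (C : Matrix m n ℝ) (P : Matrix n n ℝ) (hPs : Pᴴ = P) (hPi : P * P = P)

include hPs hPi in
lemma frobSq_mul_one_sub_proj :
    frobSq (C * (1 - P)) = Matrix.trace (Cᴴ * C) - Matrix.trace (Cᴴ * C * P) := by
  rw [frobSq_eq_trace, Matrix.conjTranspose_mul]
  have h1 : (1 - P)ᴴ = 1 - P := by
    rw [Matrix.conjTranspose_sub, Matrix.conjTranspose_one, hPs]
  have h2 : (1 - P) * (1 - P) = 1 - P := by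
    rw [Matrix.mul_sub, Matrix.sub_mul, Matrix.sub_mul, hPi, Matrix.mul_one, Matrix.one_mul]
    simp
  rw [h1]
  rw [show (1 - P) * Cᴴ * (C * (1 - P)) = (1 - P) * (Cᴴ * C * (1 - P)) by
    simp [Matrix.mul_assoc]]
  rw [Matrix.trace_mul_comm, Matrix.mul_assoc, h2, Matrix.mul_sub, Matrix.mul_one,
    Matrix.trace_sub]

include hPs hPi in
lemma frobSq_mul_one_sub_proj_le : frobSq (C * (1 - P)) ≤ frobSq C := by
  rw [frobSq_mul_one_sub_proj C P hPs hPi, frobSq_eq_trace, sub_le_self_iff]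
  have : Matrix.trace (Cᴴ * C * P) = frobSq (C * P) := by
    rw [frobSq_eq_trace, Matrix.conjTranspose_mul, hPs]
    calc Matrix.trace (Cᴴ * C * P) = Matrix.trace ((Cᴴ * C * P) * P) := by
          conv_rhs => rw [Matrix.mul_assoc, hPi]
      _ = Matrix.trace (P * (Cᴴ * C * P)) := (Matrix.trace_mul_comm _ _)
      _ = Matrix.trace (P * Cᴴ * (C * P)) := by simp [Matrix.mul_assoc]
  rw [this]; exact frobSq_nonneg _
end Proj

/- ===== eigen data ===== -/
variable {p q : ℕ} (M : Matrix (Fin p) (Fin q) ℝ)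

noncomputable def evM : Fin q → ℝ := (Matrix.isHermitian_conjTranspose_mul_self M).eigenvalues
noncomputable def wM : Fin q → (Fin q → ℝ) :=
  fun j => ⇑((Matrix.isHermitian_conjTranspose_mul_self M).eigenvectorBasis j)

lemma wM_dot (j l : Fin q) : wM M j ⬝ᵥ wM M l = if j = l then 1 else 0 := by
  have h := orthonormal_iff_ite.mp
    (Matrix.isHermitian_conjTranspose_mul_self M).eigenvectorBasis.orthonormal j l
  rw [dotProduct_comm]
  simpa [PiLp.inner_apply, RCLike.inner_apply, dotProduct, wM] using h

lemma wM_eigen (j : Fin q) : (Mᴴ * M) *ᵥ wM M j = evM M j • wM M j :=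
  (Matrix.isHermitian_conjTranspose_mul_self M).mulVec_eigenvectorBasis j

lemma evM_nonneg (j : Fin q) : 0 ≤ evM M j :=
  Matrix.eigenvalues_conjTranspose_mul_self_nonneg M j

lemma wM_expand (x : Fin q → ℝ) (i : Fin q) :
    x i = ∑ j, (wM M j ⬝ᵥ x) * wM M j i := by
  classical
  set b := (Matrix.isHermitian_conjTranspose_mul_self M).eigenvectorBasis with hb
  have h := b.sum_repr' ((WithLp.equiv 2 (Fin q → ℝ)).symm x)
  have h3 := congrFun (congrArg (fun z : EuclideanSpace ℝ (Fin q) => (fun i : Fin q => z i)) h) i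
  simp only at h3
  rw [show x i = ((WithLp.equiv 2 (Fin q → ℝ)).symm x) i from rfl, ← h3]
  rw [show ((∑ j, (inner ℝ (b j) ((WithLp.equiv 2 (Fin q → ℝ)).symm x) : ℝ) • b j :
      EuclideanSpace ℝ (Fin q)) i) = ∑ j, ((inner ℝ (b j) ((WithLp.equiv 2 (Fin q → ℝ)).symm x) : ℝ)
        • b j : EuclideanSpace ℝ (Fin q)) i by rw [WithLp.ofLp_sum, Finset.sum_apply]]
  refine Finset.sum_congr rfl fun j _ => ?_
  simp [PiLp.inner_apply, RCLike.inner_apply, dotProduct, wM, hb, PiLp.smul_apply]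
  exact Or.inl (Finset.sum_congr rfl fun _ _ => mul_comm _ _)

lemma trace_eq_sum_evM : Matrix.trace (Mᴴ * M) = ∑ j, evM M j := by
  set hH := Matrix.isHermitian_conjTranspose_mul_self M
  set U : Matrix (Fin q) (Fin q) ℝ := (hH.eigenvectorUnitary : Matrix (Fin q) (Fin q) ℝ) with hU
  calc Matrix.trace (Mᴴ * M)
      = Matrix.trace (U * Matrix.diagonal (RCLike.ofReal ∘ hH.eigenvalues) * star U) := by
        conv_lhs => rw [hH.spectral_theorem, Unitary.conjStarAlgAut_apply]
    _ = Matrix.trace (star U * U * Matrix.diagonal (RCLike.ofReal ∘ hH.eigenvalues)) := by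
        rw [Matrix.trace_mul_comm, Matrix.mul_assoc]
    _ = ∑ j, evM M j := by
        rw [hU, Unitary.coe_star_mul_self, Matrix.one_mul, Matrix.trace_diagonal]
        simp [evM]

lemma dot_expand (x y : Fin q → ℝ) :
    x ⬝ᵥ y = ∑ j, (wM M j ⬝ᵥ x) * (wM M j ⬝ᵥ y) := by
  calc x ⬝ᵥ y = ∑ i, (∑ j, (wM M j ⬝ᵥ x) * wM M j i) * y i := by
        refine Finset.sum_congr rfl fun i _ => ?_
        rw [← wM_expand M x i]
    _ = ∑ i, ∑ j, (wM M j ⬝ᵥ x) * (wM M j i * y i) := by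
        refine Finset.sum_congr rfl fun i _ => ?_
        rw [Finset.sum_mul]
        exact Finset.sum_congr rfl fun j _ => by ring
    _ = ∑ j, (wM M j ⬝ᵥ x) * (wM M j ⬝ᵥ y) := by
        rw [Finset.sum_comm]
        refine Finset.sum_congr rfl fun j _ => ?_
        rw [← Finset.mul_sum]
        rfl

lemma dot_H_eigen (x : Fin q → ℝ) (j : Fin q) :
    wM M j ⬝ᵥ ((Mᴴ * M) *ᵥ x) = evM M j * (wM M j ⬝ᵥ x) := by
  rw [← dot_mulVec_mulVec, dotProduct_comm, dot_mulVec_mulVec, wM_eigen,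
    dotProduct_smul, smul_eq_mul, dotProduct_comm]

lemma dot_H_expand (x y : Fin q → ℝ) :
    x ⬝ᵥ ((Mᴴ * M) *ᵥ y) = ∑ j, evM M j * (wM M j ⬝ᵥ x) * (wM M j ⬝ᵥ y) := by
  rw [dot_expand M x]
  refine Finset.sum_congr rfl fun j _ => ?_
  rw [dot_H_eigen]; ring

/- ===== sorted eigenvalues ===== -/
noncomputable def sigmaM : Equiv.Perm (Fin q) := Fin.revPerm.trans (Tuple.sort (evM M))
noncomputable def muM : Fin q → ℝ := fun r => evM M (sigmaM M r)

lemma muM_nonneg (j : Fin q) : 0 ≤ muM M j := evM_nonneg M _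

lemma muM_antitone : Antitone (muM M) := by
  intro r s hrs
  have h := Tuple.monotone_sort (evM M)
  have : s.rev ≤ r.rev := Fin.rev_le_rev.mpr hrs
  exact h this

lemma sum_muM : ∑ j, muM M j = ∑ j, evM M j := Equiv.sum_comp (sigmaM M) (evM M)

lemma card_filter_lt_fin {q k : ℕ} (h : k < q) :
    (Finset.univ.filter fun j : Fin q => (j : ℕ) < k).card = k := by
  have : (Finset.univ.filter fun j : Fin q => (j : ℕ) < k) = Finset.Iio (⟨k, h⟩ : Fin q) := by
    ext j; simp [Fin.lt_def]
  rw [this, Fin.card_Iio]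

lemma weighted_sum_le {q k : ℕ} {μ t : Fin q → ℝ} (hanti : Antitone μ)
    (hnn : ∀ j, 0 ≤ μ j) (h0 : ∀ j, 0 ≤ t j) (h1 : ∀ j, t j ≤ 1)
    (hsum : ∑ j, t j ≤ (k : ℝ)) :
    ∑ j, μ j * t j ≤ ∑ j ∈ Finset.univ.filter fun j : Fin q => (j : ℕ) < k, μ j := by
  by_cases hkq : q ≤ k
  · have hfil : (Finset.univ.filter fun j : Fin q => (j : ℕ) < k) = Finset.univ := by
      apply Finset.filter_true_of_mem; intro j _; exact lt_of_lt_of_le j.isLt hkq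
    rw [hfil]
    exact Finset.sum_le_sum fun j _ => mul_le_of_le_one_right (hnn j) (h1 j)
  · push_neg at hkq
    set K : Fin q := ⟨k, hkq⟩ with hK
    set c := μ K with hc
    have hsplit := (Finset.sum_filter_add_sum_filter_not Finset.univ
      (fun j : Fin q => (j : ℕ) < k) (fun j => μ j * t j)).symm
    rw [hsplit]
    have hb1 : ∑ j ∈ Finset.univ.filter fun j : Fin q => (j : ℕ) < k, μ j * t j
        ≤ ∑ j ∈ Finset.univ.filter fun j : Fin q => (j : ℕ) < k, (μ j + c * (t j - 1)) := by
      refine Finset.sum_le_sum fun j hj => ?_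
      have hjk : (j : ℕ) < k := (Finset.mem_filter.mp hj).2
      have hcj : c ≤ μ j := hanti (by rw [Fin.le_def]; exact le_of_lt hjk)
      nlinarith [h1 j, h0 j]
    have hb2 : ∑ j ∈ Finset.univ.filter fun j : Fin q => ¬ (j : ℕ) < k, μ j * t j
        ≤ ∑ j ∈ Finset.univ.filter fun j : Fin q => ¬ (j : ℕ) < k, c * t j := by
      refine Finset.sum_le_sum fun j hj => ?_
      have hjk : ¬ (j : ℕ) < k := (Finset.mem_filter.mp hj).2
      have hcj : μ j ≤ c := hanti (by rw [Fin.le_def]; exact le_of_not_gt hjk)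
      exact mul_le_mul_of_nonneg_right hcj (h0 j)
    refine le_trans (add_le_add hb1 hb2) ?_
    rw [Finset.sum_add_distrib, add_assoc]
    apply add_le_of_nonpos_right
    rw [← Finset.mul_sum, ← Finset.mul_sum, ← mul_add]
    have hsum2 : ∑ j ∈ Finset.univ.filter (fun j : Fin q => (j : ℕ) < k), (t j - 1)
        + ∑ j ∈ Finset.univ.filter (fun j : Fin q => ¬ (j : ℕ) < k), t j
        = (∑ j, t j) - k := by
      rw [Finset.sum_sub_distrib, Finset.sum_const, card_filter_lt_fin hkq]
      have := Finset.sum_filter_add_sum_filter_not Finset.univ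
        (fun j : Fin q => (j : ℕ) < k) t
      simp only [nsmul_eq_mul, mul_one]
      linarith
    rw [hsum2]
    exact mul_nonpos_of_nonneg_of_nonpos (hnn K) (by linarith)

/- ===== membership (achievability) ===== -/
lemma ey_mem (k : ℕ) : ∃ u : Fin k → Fin p → ℝ, ∃ v : Fin k → Fin q → ℝ,
    frobSq (M - ∑ r, Matrix.vecMulVec (u r) (v r))
      = ∑ j ∈ Finset.univ.filter (fun j : Fin q => k ≤ (j : ℕ)), muM M j := by
  classical
  set v : Fin k → Fin q → ℝ :=
    fun r => if h : (r : ℕ) < q then wM M (sigmaM M ⟨(r : ℕ), h⟩) else 0 with hv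
  set u : Fin k → Fin p → ℝ := fun r => M *ᵥ v r with hu
  set mu' : Fin k → ℝ :=
    fun r => if h : (r : ℕ) < q then muM M ⟨(r : ℕ), h⟩ else 0 with hmu'
  refine ⟨u, v, ?_⟩
  set X : Matrix (Fin p) (Fin q) ℝ := ∑ r, Matrix.vecMulVec (u r) (v r) with hX
  have hv_dot : ∀ r s : Fin k, v r ⬝ᵥ v s = if r = s ∧ (r : ℕ) < q then 1 else 0 := by
    intro r s
    by_cases hr : (r : ℕ) < q
    · by_cases hs : (s : ℕ) < q
      · rw [hv]
        simp only [dif_pos hr, dif_pos hs]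
        rw [wM_dot]
        congr 1
        simp only [EmbeddingLike.apply_eq_iff_eq, Fin.mk.injEq, eq_iff_iff]
        constructor
        · intro h; exact ⟨Fin.ext h, hr⟩
        · intro h; exact congrArg Fin.val h.1
      · have hrs : ¬ (r = s ∧ (r : ℕ) < q) := by
          rintro ⟨rfl, _⟩; exact hs hr
        rw [hv]; simp only [dif_pos hr, dif_neg hs, if_neg hrs, dotProduct_zero]
    · have hrs : ¬ (r = s ∧ (r : ℕ) < q) := fun h => hr h.2
      rw [hv]; simp only [dif_neg hr, if_neg hrs, zero_dotProduct]
  have hv_H : ∀ r : Fin k, (Mᴴ * M) *ᵥ v r = mu' r • v r := by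
    intro r
    by_cases hr : (r : ℕ) < q
    · rw [hv, hmu']
      simp only [dif_pos hr]
      exact wM_eigen M _
    · rw [hv, hmu']
      simp only [dif_neg hr, Matrix.mulVec_zero, smul_zero]
  have hvv : ∀ r : Fin k, v r ⬝ᵥ ((Mᴴ * M) *ᵥ v r) = mu' r := by
    intro r
    rw [hv_H r, dotProduct_smul, smul_eq_mul, hv_dot]
    by_cases hr : (r : ℕ) < q
    · rw [if_pos ⟨rfl, hr⟩, mul_one]
    · rw [if_neg (fun h => hr h.2), mul_zero, hmu']
      simp [dif_neg hr]
  have hMX : Matrix.trace (Mᴴ * X) = ∑ r, mu' r := by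
    rw [hX, Matrix.mul_sum, Matrix.trace_sum]
    refine Finset.sum_congr rfl fun r _ => ?_
    rw [trace_mul_vecMulVec, hu]
    simp only
    rw [Matrix.mulVec_mulVec, hvv r]
  have hXX : Matrix.trace (Xᴴ * X) = ∑ r, mu' r := by
    rw [hX, Matrix.conjTranspose_sum, Matrix.sum_mul, Matrix.trace_sum]
    refine Finset.sum_congr rfl fun r _ => ?_
    rw [Matrix.mul_sum, Matrix.trace_sum]
    rw [Finset.sum_eq_single r ?h1 ?h2]
    · rw [vecMulVec_conjT, trace_mul_vecMulVec, _root_.vecMulVec_mulVec, dotProduct_smul,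
        smul_eq_mul, hv_dot]
      rw [hu]
      simp only
      rw [dot_mulVec_mulVec, hvv r]
      by_cases hr : (r : ℕ) < q
      · simp [hr]
      · simp [hmu', hr]
    · intro s _ hs
      rw [vecMulVec_conjT, trace_mul_vecMulVec, _root_.vecMulVec_mulVec, dotProduct_smul,
        smul_eq_mul, hv_dot]
      rw [if_neg (fun h => hs h.1), mul_zero]
    · intro h; exact absurd (Finset.mem_univ r) h
  have hXM : Matrix.trace (Xᴴ * M) = Matrix.trace (Mᴴ * X) := by
    rw [← Matrix.trace_transpose (Xᴴ * M), Matrix.transpose_mul,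
      Matrix.conjTranspose_eq_transpose_of_trivial, Matrix.transpose_transpose,
      ← Matrix.conjTranspose_eq_transpose_of_trivial]
  have hexp : frobSq (M - X)
      = Matrix.trace (Mᴴ * M) - ∑ r, mu' r := by
    rw [frobSq_eq_trace, Matrix.conjTranspose_sub, Matrix.sub_mul, Matrix.mul_sub,
      Matrix.mul_sub, Matrix.trace_sub, Matrix.trace_sub, Matrix.trace_sub, hMX, hXX, hXM, hMX]
    ring
  have hmu'sum : ∑ r, mu' r
      = ∑ j ∈ Finset.univ.filter (fun j : Fin q => (j : ℕ) < k), muM M j := by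
    rw [← Finset.sum_subset (Finset.subset_univ
      (Finset.univ.filter (fun r : Fin k => (r : ℕ) < q)))
      (fun r _ hr => by
        rw [hmu']
        simp only [Finset.mem_filter, Finset.mem_univ, true_and] at hr
        simp [dif_neg hr])]
    refine Finset.sum_bij' (fun (r : Fin k) (hr : r ∈ Finset.univ.filter
        (fun r : Fin k => (r : ℕ) < q)) =>
        (⟨(r : ℕ), (Finset.mem_filter.mp hr).2⟩ : Fin q))
      (fun (j : Fin q) (hj : j ∈ Finset.univ.filter (fun j : Fin q => (j : ℕ) < k)) =>
        (⟨(j : ℕ), (Finset.mem_filter.mp hj).2⟩ : Fin k)) ?_ ?_ ?_ ?_ ?_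
    · intro r hr
      simp only [Finset.mem_filter, Finset.mem_univ, true_and]
      exact r.isLt
    · intro j hj
      simp only [Finset.mem_filter, Finset.mem_univ, true_and]
      exact j.isLt
    · intro r hr; exact Fin.ext rfl
    · intro j hj; exact Fin.ext rfl
    · intro r hr
      rw [hmu']
      simp only [dif_pos (Finset.mem_filter.mp hr).2]
  rw [hexp, hmu'sum, trace_eq_sum_evM, ← sum_muM,
    ← Finset.sum_filter_add_sum_filter_not Finset.univ (fun j : Fin q => (j : ℕ) < k) (muM M)]
  rw [show (Finset.univ.filter fun j : Fin q => ¬ (j : ℕ) < k)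
      = Finset.univ.filter fun j : Fin q => k ≤ (j : ℕ) by
    apply Finset.filter_congr; intro j _; simp [not_lt]]
  ring

/- ===== more vecMulVec algebra ===== -/
lemma vecMulVec_mul_vecMulVec {l m n : Type*} [Fintype m]
    (a : l → ℝ) (b : m → ℝ) (x : m → ℝ) (y : n → ℝ) :
    Matrix.vecMulVec a b * Matrix.vecMulVec x y = (b ⬝ᵥ x) • Matrix.vecMulVec a y := by
  ext i j
  simp only [Matrix.mul_apply, Matrix.vecMulVec_apply, Matrix.smul_apply, smul_eq_mul,
    dotProduct, Finset.sum_mul]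
  refine Finset.sum_congr rfl fun l _ => by ring

lemma vecMul_vecMulVec {m n : Type*} [Fintype m] (x a : m → ℝ) (b : n → ℝ) :
    x ᵥ* Matrix.vecMulVec a b = (x ⬝ᵥ a) • b := by
  ext j
  simp only [Matrix.vecMul, Matrix.vecMulVec_apply, dotProduct, Pi.smul_apply,
    smul_eq_mul, Finset.sum_mul]
  refine Finset.sum_congr rfl fun l _ => by ring

lemma vecMulVec_mul_right {l m n : Type*} [Fintype m] (a : l → ℝ) (b : m → ℝ)
    (P : Matrix m n ℝ) :
    Matrix.vecMulVec a b * P = Matrix.vecMulVec a (b ᵥ* P) := by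
  ext i j
  simp only [Matrix.mul_apply, Matrix.vecMulVec_apply, Matrix.vecMul, dotProduct,
    Finset.mul_sum]
  refine Finset.sum_congr rfl fun l _ => by ring

lemma vecMul_sumM {ι m n : Type*} [Fintype m] (s : Finset ι) (x : m → ℝ)
    (A : ι → Matrix m n ℝ) : x ᵥ* (∑ i ∈ s, A i) = ∑ i ∈ s, x ᵥ* A i := by
  ext j
  simp only [Matrix.vecMul, dotProduct, Matrix.sum_apply, Finset.mul_sum,
    Finset.sum_apply]
  exact Finset.sum_comm

/- ===== lower bound ===== -/
lemma ey_lb (k : ℕ) (u : Fin k → Fin p → ℝ) (v : Fin k → Fin q → ℝ) :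
    ∑ j ∈ Finset.univ.filter (fun j : Fin q => k ≤ (j : ℕ)), muM M j
      ≤ frobSq (M - ∑ r, Matrix.vecMulVec (u r) (v r)) := by
  classical
  set X : Matrix (Fin p) (Fin q) ℝ := ∑ r, Matrix.vecMulVec (u r) (v r) with hX
  set v' : Fin k → EuclideanSpace ℝ (Fin q) :=
    fun r => (WithLp.equiv 2 (Fin q → ℝ)).symm (v r) with hv'
  set S : Submodule ℝ (EuclideanSpace ℝ (Fin q)) := Submodule.span ℝ (Set.range v') with hS
  set m := Module.finrank ℝ S with hm
  have hmk : m ≤ k := by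
    rw [hm, hS]
    refine le_trans (finrank_span_le_card (Set.range v')) ?_
    rw [Set.toFinset_range]
    exact le_trans (Finset.card_image_le) (by simp)
  set b : OrthonormalBasis (Fin m) ℝ S := stdOrthonormalBasis ℝ S with hbdef
  set c : Fin m → Fin q → ℝ := fun i => (fun j => (((b i) : EuclideanSpace ℝ (Fin q)) j)) with hc
  have hc_dot : ∀ i j, c i ⬝ᵥ c j = if i = j then 1 else 0 := by
    intro i j
    have h := orthonormal_iff_ite.mp b.orthonormal i j
    rw [Submodule.coe_inner] at h
    rw [dotProduct_comm]
    simpa [PiLp.inner_apply, RCLike.inner_apply, dotProduct, hc] using h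
  set P : Matrix (Fin q) (Fin q) ℝ := ∑ i, Matrix.vecMulVec (c i) (c i) with hP
  have hPsym : Pᴴ = P := by
    rw [hP, Matrix.conjTranspose_sum]
    exact Finset.sum_congr rfl fun i _ => vecMulVec_conjT _ _
  have hPP : P * P = P := by
    rw [hP, Matrix.sum_mul]
    refine Finset.sum_congr rfl fun i _ => ?_
    rw [Matrix.mul_sum]
    rw [Finset.sum_eq_single i ?h1 ?h2]
    · rw [_root_.vecMulVec_mul_vecMulVec, hc_dot, if_pos rfl, one_smul]
    · intro s _ hs
      rw [_root_.vecMulVec_mul_vecMulVec, hc_dot, if_neg (fun h => hs h.symm), zero_smul]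
    · intro h; exact absurd (Finset.mem_univ i) h
  have hproj : ∀ x : Fin q → ℝ, (WithLp.equiv 2 (Fin q → ℝ)).symm x ∈ S →
      x ᵥ* P = x := by
    intro x hx
    set xS : S := (⟨(WithLp.equiv 2 (Fin q → ℝ)).symm x, hx⟩ : S) with hxS
    set α : Fin m → ℝ := fun i => (inner ℝ (b i) xS : ℝ) with hα
    have hrepr := b.sum_repr' xS
    have hcoe := congrArg (fun z : S => ((z : EuclideanSpace ℝ (Fin q)) : Fin q → ℝ)) hrepr
    simp only at hcoe
    have hterm : ∀ j : Fin q, x j = ∑ i, α i * c i j := by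
      intro j
      have e1 : ((∑ i, α i • b i : S) : EuclideanSpace ℝ (Fin q))
          = ∑ i, α i • ((b i : S) : EuclideanSpace ℝ (Fin q)) := by
        rw [Submodule.coe_sum]
        simp only [SetLike.val_smul]
      have e2 := congrFun hcoe j
      rw [show x j = ((WithLp.equiv 2 (Fin q → ℝ)).symm x) j from rfl, ← e2]
      rw [show ((∑ i, (inner ℝ (b i) xS : ℝ) • b i : S) : EuclideanSpace ℝ (Fin q)) j
          = ((∑ i, α i • b i : S) : EuclideanSpace ℝ (Fin q)) j from rfl]
      rw [e1]
      rw [show ((∑ i, α i • ((b i : S) : EuclideanSpace ℝ (Fin q))) j)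
          = ∑ i, (α i • ((b i : S) : EuclideanSpace ℝ (Fin q))) j by
        rw [WithLp.ofLp_sum, Finset.sum_apply]]
      rfl
    have hα_dot : ∀ i, α i = c i ⬝ᵥ x := by
      intro i
      rw [hα]
      simp only
      rw [Submodule.coe_inner]
      simp [PiLp.inner_apply, RCLike.inner_apply, dotProduct, hc]
      exact Finset.sum_congr rfl fun _ _ => mul_comm _ _
    ext j
    rw [hP, vecMul_sumM]
    rw [show (∑ i, x ᵥ* Matrix.vecMulVec (c i) (c i)) j
        = ∑ i, (x ᵥ* Matrix.vecMulVec (c i) (c i)) j from Finset.sum_apply j univ _]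
    rw [hterm j]
    refine Finset.sum_congr rfl fun i _ => ?_
    rw [_root_.vecMul_vecMulVec, hα_dot i, dotProduct_comm]
    rfl
  have hXP : X * P = X := by
    rw [hX, Matrix.sum_mul]
    refine Finset.sum_congr rfl fun r _ => ?_
    rw [vecMulVec_mul_right, hproj (v r) (Submodule.subset_span ⟨r, rfl⟩)]
  have key1 : frobSq ((M - X) * (1 - P)) ≤ frobSq (M - X) :=
    frobSq_mul_one_sub_proj_le (M - X) P hPsym hPP
  have hMXP : (M - X) * (1 - P) = M * (1 - P) := by
    rw [Matrix.sub_mul, Matrix.mul_sub, Matrix.mul_sub, Matrix.mul_one, Matrix.mul_one, hXP,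
      sub_self, sub_zero]
  have key2 : frobSq (M * (1 - P))
      = Matrix.trace (Mᴴ * M) - Matrix.trace (Mᴴ * M * P) :=
    frobSq_mul_one_sub_proj M P hPsym hPP
  set t : Fin q → ℝ := fun j => ∑ i, (wM M j ⬝ᵥ c i) ^ 2 with ht
  have htrace : Matrix.trace (Mᴴ * M * P) = ∑ j, evM M j * t j := by
    rw [hP, Matrix.mul_sum, Matrix.trace_sum]
    have e1 : ∀ i, Matrix.trace (Mᴴ * M * Matrix.vecMulVec (c i) (c i))
        = ∑ j, evM M j * ((wM M j ⬝ᵥ c i) * (wM M j ⬝ᵥ c i)) := by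
      intro i
      rw [trace_mul_vecMulVec, dot_H_expand]
      exact Finset.sum_congr rfl fun j _ => by ring
    rw [Finset.sum_congr rfl fun i _ => e1 i, Finset.sum_comm]
    refine Finset.sum_congr rfl fun j _ => ?_
    rw [ht, Finset.mul_sum]
    exact Finset.sum_congr rfl fun i _ => by ring
  have ht0 : ∀ j, 0 ≤ t j := fun j => Finset.sum_nonneg fun i _ => sq_nonneg _
  have htsum : ∑ j, t j = (m : ℝ) := by
    rw [ht, Finset.sum_comm]
    have e2 : ∀ i, ∑ j, (wM M j ⬝ᵥ c i) ^ 2 = (1 : ℝ) := by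
      intro i
      have := (dot_expand M (c i) (c i)).symm
      rw [hc_dot, if_pos rfl] at this
      rw [← this]
      exact Finset.sum_congr rfl fun j _ => by ring
    rw [Finset.sum_congr rfl fun i _ => e2 i, Finset.sum_const, Finset.card_univ]
    simp
  have hON : Orthonormal ℝ (fun i => ((b i : S) : EuclideanSpace ℝ (Fin q))) := by
    rw [orthonormal_iff_ite]
    intro i j
    rw [← Submodule.coe_inner]
    exact orthonormal_iff_ite.mp b.orthonormal i j
  have ht1 : ∀ j, t j ≤ 1 := by
    intro j
    have hB := hON.sum_inner_products_le (𝕜 := ℝ)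
      ((WithLp.equiv 2 (Fin q → ℝ)).symm (wM M j)) (s := Finset.univ)
    have hnorm : ‖(WithLp.equiv 2 (Fin q → ℝ)).symm (wM M j)‖ ^ 2 = 1 := by
      rw [← real_inner_self_eq_norm_sq]
      have : (inner ℝ ((WithLp.equiv 2 (Fin q → ℝ)).symm (wM M j))
          ((WithLp.equiv 2 (Fin q → ℝ)).symm (wM M j)) : ℝ) = wM M j ⬝ᵥ wM M j := by
        rw [PiLp.inner_apply]
        simp [dotProduct, sq]
      rw [this, wM_dot, if_pos rfl]
    rw [hnorm] at hB
    refine le_trans (le_of_eq ?_) hB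
    rw [ht]
    refine Finset.sum_congr rfl fun i _ => ?_
    have : (inner ℝ ((fun i => ((b i : S) : EuclideanSpace ℝ (Fin q))) i)
        ((WithLp.equiv 2 (Fin q → ℝ)).symm (wM M j)) : ℝ) = c i ⬝ᵥ wM M j := by
      simp [PiLp.inner_apply, RCLike.inner_apply, dotProduct, hc]
      exact Finset.sum_congr rfl fun _ _ => mul_comm _ _
    rw [this, Real.norm_eq_abs, sq_abs, dotProduct_comm]
  have hsm : ∑ j, evM M j * t j
      ≤ ∑ j ∈ Finset.univ.filter (fun j : Fin q => (j : ℕ) < k), muM M j := by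
    have e3 : ∑ j, evM M j * t j = ∑ j, muM M j * t (sigmaM M j) :=
      (Equiv.sum_comp (sigmaM M) (fun j => evM M j * t j)).symm
    rw [e3]
    refine weighted_sum_le (muM_antitone M) (muM_nonneg M)
      (fun j => ht0 _) (fun j => ht1 _) ?_
    rw [Equiv.sum_comp (sigmaM M) t, htsum]
    exact_mod_cast hmk
  have hfinal : Matrix.trace (Mᴴ * M)
      - ∑ j ∈ Finset.univ.filter (fun j : Fin q => (j : ℕ) < k), muM M j
      ≤ frobSq (M - X) := by
    rw [hMXP] at key1
    rw [key2, htrace] at key1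
    linarith
  have hsplit : Matrix.trace (Mᴴ * M)
      = ∑ j ∈ Finset.univ.filter (fun j : Fin q => (j : ℕ) < k), muM M j
        + ∑ j ∈ Finset.univ.filter (fun j : Fin q => k ≤ (j : ℕ)), muM M j := by
    rw [trace_eq_sum_evM, ← sum_muM,
      ← Finset.sum_filter_add_sum_filter_not Finset.univ (fun j : Fin q => (j : ℕ) < k) (muM M)]
    congr 1
    refine Finset.sum_congr (Finset.filter_congr fun j _ => ?_) fun _ _ => rfl
    simp [not_lt]
  linarith

/- ===== core IsLeast ===== -/
lemma ey_isLeast (k : ℕ) :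
    IsLeast
      {E : ℝ | ∃ u : Fin k → Fin p → ℝ, ∃ v : Fin k → Fin q → ℝ,
        E = frobSq (M - ∑ r, Matrix.vecMulVec (u r) (v r))}
      (∑ j ∈ Finset.univ.filter (fun j : Fin q => k ≤ (j : ℕ)), muM M j) := by
  constructor
  · obtain ⟨u, v, h⟩ := ey_mem M k
    exact ⟨u, v, h.symm⟩
  · rintro E ⟨u, v, rfl⟩
    exact ey_lb M k u v

/- ===== the rearrangement layer ===== -/
lemma tailSqSingular_eq (k : ℕ) :
    tailSqSingular M k = ∑ j ∈ Finset.univ.filter (fun j : Fin q => k ≤ (j : ℕ)), muM M j := by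
  unfold tailSqSingular
  refine Finset.sum_congr rfl fun j _ => ?_
  simp [muM, sigmaM, evM, Fin.revPerm]

def vecL {a₁ a₂ : ℕ} (A : Matrix (Fin a₁) (Fin a₂) ℝ) : Fin (a₁ * a₂) → ℝ :=
  fun i => A (finProdFinEquiv.symm i).1 (finProdFinEquiv.symm i).2

lemma frobSq_rearrange {a₁ a₂ b₁ b₂ : ℕ}
    (W : Matrix (Fin a₁ × Fin b₁) (Fin a₂ × Fin b₂) ℝ) :
    frobSq (rearrange W) = frobSq W := by
  unfold frobSq rearrange
  simp only [Fintype.sum_prod_type]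
  refine Finset.sum_congr rfl fun i _ => ?_
  exact Finset.sum_comm

lemma frobSq_reindex {m n m' n' : Type*} [Fintype m] [Fintype n] [Fintype m'] [Fintype n']
    (e₁ : m ≃ m') (e₂ : n ≃ n') (X : Matrix m n ℝ) :
    frobSq (Matrix.reindex e₁ e₂ X) = frobSq X := by
  unfold frobSq
  rw [← Equiv.sum_comp e₁ (fun i => ∑ j, (Matrix.reindex e₁ e₂ X i j) ^ 2)]
  refine Finset.sum_congr rfl fun i _ => ?_
  rw [← Equiv.sum_comp e₂ (fun j => (Matrix.reindex e₁ e₂ X (e₁ i) j) ^ 2)]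
  refine Finset.sum_congr rfl fun j _ => ?_
  simp

lemma key_bridge {a₁ a₂ b₁ b₂ k : ℕ}
    (W : Matrix (Fin a₁ × Fin b₁) (Fin a₂ × Fin b₂) ℝ)
    (A : Fin k → Matrix (Fin a₁) (Fin a₂) ℝ) (B : Fin k → Matrix (Fin b₁) (Fin b₂) ℝ) :
    Matrix.reindex finProdFinEquiv finProdFinEquiv (rearrange (W - ∑ r, A r ⊗ₖ B r))
      = Matrix.reindex finProdFinEquiv finProdFinEquiv (rearrange W)
        - ∑ r, Matrix.vecMulVec (vecL (A r)) (vecL (B r)) := by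
  ext i j
  simp only [Matrix.reindex_apply, Matrix.submatrix_apply, Matrix.sub_apply, Matrix.sum_apply,
    rearrange, Matrix.vecMulVec_apply, Matrix.kroneckerMap_apply, vecL]

lemma vecL_inv {a₁ a₂ : ℕ} (f : Fin (a₁ * a₂) → ℝ) :
    vecL (fun i j => f (finProdFinEquiv (i, j))) = f := by
  funext i
  unfold vecL
  show f (finProdFinEquiv ((finProdFinEquiv.symm i).1, (finProdFinEquiv.symm i).2)) = f i
  rw [Prod.mk.eta, Equiv.apply_symm_apply]

lemma frobSq_bridge {a₁ a₂ b₁ b₂ k : ℕ}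
    (W : Matrix (Fin a₁ × Fin b₁) (Fin a₂ × Fin b₂) ℝ)
    (A : Fin k → Matrix (Fin a₁) (Fin a₂) ℝ) (B : Fin k → Matrix (Fin b₁) (Fin b₂) ℝ) :
    frobSq (W - ∑ r, A r ⊗ₖ B r)
      = frobSq (Matrix.reindex finProdFinEquiv finProdFinEquiv (rearrange W)
          - ∑ r, Matrix.vecMulVec (vecL (A r)) (vecL (B r))) := by
  rw [← key_bridge, frobSq_reindex, frobSq_rearrange]


/-- Eckart–Young for Kronecker sums: for any `W` and `R̂ ≥ 1`, the minimum of
`‖W − Σ_{r=1}^{R̂} A_r ⊗ B_r‖²_F` over factor matrices equals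
`Σ_{r > R̂} σ_r(R(W))²`, the sum of squared singular values of the rearranged matrix
beyond index `R̂` (and the minimum is attained). -/
theorem kron_low_rank_approximation_error {a₁ a₂ b₁ b₂ Rhat : ℕ} (hR : 1 ≤ Rhat)
    (W : Matrix (Fin a₁ × Fin b₁) (Fin a₂ × Fin b₂) ℝ) :
    IsLeast
      {E : ℝ | ∃ (A : Fin Rhat → Matrix (Fin a₁) (Fin a₂) ℝ)
          (B : Fin Rhat → Matrix (Fin b₁) (Fin b₂) ℝ),
          E = frobSq (W - ∑ r, A r ⊗ₖ B r)}
      (tailSqSingular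
        (Matrix.reindex finProdFinEquiv finProdFinEquiv (rearrange W)) Rhat) := by
  set M₀ := Matrix.reindex finProdFinEquiv finProdFinEquiv (rearrange W) with hM₀
  rw [tailSqSingular_eq]
  constructor
  · obtain ⟨u, v, h⟩ := ey_mem M₀ Rhat
    refine ⟨fun r => fun i j => u r (finProdFinEquiv (i, j)),
      fun r => fun i j => v r (finProdFinEquiv (i, j)), ?_⟩
    refine Eq.trans ?_ (frobSq_bridge W _ _).symm
    simp only [vecL_inv]
    exact h.symm
  · rintro E ⟨A, B, rfl⟩
    rw [frobSq_bridge]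
    exact ey_lb M₀ Rhat _ _
end

section
/- Any matrix W ∈ ℝ^{w₁×w₂} with w₁ = ∏_{k=1}^S a₁^{(k)} and w₂ = ∏_{k=1}^S a₂^{(k)} admits an exact SeKron representation: there exist ranks R₁,…,R_{S−1} and factor matrices A^{(k)}_{r₁⋯r_k} ∈ ℝ^{a₁^{(k)}×a₂^{(k)}} such that W = Σ_{r₁=1}^{R₁} A^{(1)}_{r₁} ⊗ Σ_{r₂=1}^{R₂} A^{(2)}_{r₁r₂} ⊗ ⋯ ⊗ Σ_{r_{S−1}} A^{(S−1)}_{r₁⋯r_{S−1}} ⊗ A^{(S)}_{r₁⋯r_{S−1}}. -/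
open Kronecker Matrix Finset

/-- Flat (block-matrix) Kronecker product of two matrices. -/
noncomputable def flatKron {a₁ a₂ b₁ b₂ : ℕ}
    (A : Matrix (Fin a₁) (Fin a₂) ℝ) (B : Matrix (Fin b₁) (Fin b₂) ℝ) :
    Matrix (Fin (a₁ * b₁)) (Fin (a₂ * b₂)) ℝ :=
  fun i j => (A ⊗ₖ B) (i.divNat, i.modNat) (j.divNat, j.modNat)

/-- Sequence of Kronecker products `A^{(1)} ⊗ ⋯ ⊗ A^{(S)}` as a flat matrix. -/
noncomputable def seqKron : ∀ {S : ℕ} (a₁ a₂ : Fin S → ℕ),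
    (∀ k, Matrix (Fin (a₁ k)) (Fin (a₂ k)) ℝ) →
    Matrix (Fin (∏ k, a₁ k)) (Fin (∏ k, a₂ k)) ℝ
  | 0, _, _, _ => fun _ _ => 1
  | _ + 1, a₁, a₂, A => fun i j =>
      flatKron (A 0)
        (seqKron (fun k => a₁ k.succ) (fun k => a₂ k.succ) (fun k => A k.succ))
        (Fin.cast (Fin.prod_univ_succ a₁) i) (Fin.cast (Fin.prod_univ_succ a₂) j)

lemma seqKron_succ_apply {S : ℕ} (a₁ a₂ : Fin (S + 1) → ℕ)
    (A : ∀ k, Matrix (Fin (a₁ k)) (Fin (a₂ k)) ℝ)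
    (i : Fin (∏ k, a₁ k)) (j : Fin (∏ k, a₂ k)) :
    seqKron a₁ a₂ A i j =
      A 0 (Fin.cast (Fin.prod_univ_succ a₁) i).divNat
          (Fin.cast (Fin.prod_univ_succ a₂) j).divNat *
      seqKron (fun k => a₁ k.succ) (fun k => a₂ k.succ) (fun k => A k.succ)
          (Fin.cast (Fin.prod_univ_succ a₁) i).modNat
          (Fin.cast (Fin.prod_univ_succ a₂) j).modNat := rfl

/-- fixed rank sizes -/
def sekronR {S : ℕ} (a₁ a₂ : Fin (S + 1) → ℕ) (l : Fin S) : ℕ :=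
  a₁ l.castSucc * a₂ l.castSucc

/-- first component of a rank index at `0` -/
def sdiv {S : ℕ} (a₁ a₂ : Fin (S + 1 + 1) → ℕ) (t : Fin (sekronR a₁ a₂ 0)) : Fin (a₁ 0) :=
  Fin.divNat (m := a₁ 0) (n := a₂ 0) t

/-- second component of a rank index at `0` -/
def smod {S : ℕ} (a₁ a₂ : Fin (S + 1 + 1) → ℕ) (t : Fin (sekronR a₁ a₂ 0)) : Fin (a₂ 0) :=
  Fin.modNat (m := a₁ 0) (n := a₂ 0) t

/-- the first Kronecker factor selected by a rank index at `0` -/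
def sfac {S : ℕ} (a₁ a₂ : Fin (S + 1 + 1) → ℕ) (t : Fin (sekronR a₁ a₂ 0)) :
    Matrix (Fin (a₁ 0)) (Fin (a₂ 0)) ℝ :=
  fun i j => if i = sdiv a₁ a₂ t ∧ j = smod a₁ a₂ t then (1 : ℝ) else 0

theorem sekron_aux : ∀ (S : ℕ) (a₁ a₂ : Fin (S + 1) → ℕ)
    (W : Matrix (Fin (∏ k, a₁ k)) (Fin (∏ k, a₂ k)) ℝ),
    ∃ (A : ∀ k : Fin (S + 1), (∀ l : Fin S, Fin (sekronR a₁ a₂ l)) →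
        Matrix (Fin (a₁ k)) (Fin (a₂ k)) ℝ),
      (∀ (k : Fin (S + 1)) (r r' : ∀ l : Fin S, Fin (sekronR a₁ a₂ l)),
        (∀ l : Fin S, (l : ℕ) ≤ (k : ℕ) → r l = r' l) → A k r = A k r') ∧
      W = ∑ r : ∀ l : Fin S, Fin (sekronR a₁ a₂ l), seqKron a₁ a₂ (fun k => A k r) := by
  intro S
  induction S with
  | zero =>
    intro a₁ a₂ W
    refine ⟨fun k _ i j => W
        (Fin.cast (show a₁ k = _ by rw [Fin.prod_univ_one, Fin.fin_one_eq_zero k]) i)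
        (Fin.cast (show a₂ k = _ by rw [Fin.prod_univ_one, Fin.fin_one_eq_zero k]) j),
      fun _ _ _ _ => rfl, ?_⟩
    rw [Fintype.sum_unique]
    ext i j
    simp only [seqKron, flatKron, Matrix.kroneckerMap_apply]
    show W i j = W _ _ * 1
    rw [mul_one]
    congr 1 <;> · apply Fin.ext; simp [Fin.divNat, Nat.div_one]
  | succ S ih =>
    intro a₁ a₂ W
    have h₁ : ∏ k, a₁ k = a₁ 0 * ∏ k : Fin (S + 1), a₁ k.succ := Fin.prod_univ_succ a₁
    have h₂ : ∏ k, a₂ k = a₂ 0 * ∏ k : Fin (S + 1), a₂ k.succ := Fin.prod_univ_succ a₂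
    set m₁ := ∏ k : Fin (S + 1), a₁ k.succ with hm₁
    set m₂ := ∏ k : Fin (S + 1), a₂ k.succ with hm₂
    have hb : ∀ {n m : ℕ} (p : Fin n) (x : Fin m), p.val * m + x.val < n * m := by
      intro n m p x
      calc p.val * m + x.val < p.val * m + m := Nat.add_lt_add_left x.isLt _
        _ = (p.val + 1) * m := (Nat.succ_mul _ _).symm
        _ ≤ n * m := Nat.mul_le_mul_right _ p.isLt
    set Wb : Fin (a₁ 0) → Fin (a₂ 0) → Matrix (Fin m₁) (Fin m₂) ℝ :=
      fun p q x y => W (Fin.cast h₁.symm ⟨p.val * m₁ + x.val, hb p x⟩)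
        (Fin.cast h₂.symm ⟨q.val * m₂ + y.val, hb q y⟩) with hWb
    choose B hBdep hBeq using fun (p : Fin (a₁ 0)) (q : Fin (a₂ 0)) =>
      ih (fun k => a₁ k.succ) (fun k => a₂ k.succ) (Wb p q)
    refine ⟨fun k => Fin.cases
        (motive := fun k => (∀ l : Fin (S + 1), Fin (sekronR a₁ a₂ l)) →
          Matrix (Fin (a₁ k)) (Fin (a₂ k)) ℝ)
        (fun r => sfac a₁ a₂ (r 0))
        (fun k' r => B (sdiv a₁ a₂ (r 0)) (smod a₁ a₂ (r 0)) k' (fun l => r l.succ)) k, ?_, ?_⟩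
    · intro k r r' h
      have h0 : r 0 = r' 0 := h 0 (Nat.zero_le _)
      induction k using Fin.cases with
      | zero => simp only [Fin.cases_zero, h0]
      | succ k' =>
        simp only [Fin.cases_succ, h0]
        exact hBdep _ _ k' _ _ (fun l hl => h l.succ (Nat.succ_le_succ hl))
    · ext i j
      rw [Matrix.sum_apply]
      rw [← Equiv.sum_comp (Fin.consEquiv fun l => Fin (sekronR a₁ a₂ l))
        (fun r => seqKron a₁ a₂ (fun k => Fin.cases
          (motive := fun k => (∀ l : Fin (S + 1), Fin (sekronR a₁ a₂ l)) →
            Matrix (Fin (a₁ k)) (Fin (a₂ k)) ℝ)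
          (fun r => sfac a₁ a₂ (r 0))
          (fun k' r => B (sdiv a₁ a₂ (r 0)) (smod a₁ a₂ (r 0)) k' (fun l => r l.succ)) k r) i j)]
      rw [Fintype.sum_prod_type]
      have h2pos : 0 < a₂ 0 := by
        have hj : 0 < a₂ 0 * m₂ := h₂ ▸ j.pos
        exact Nat.pos_of_ne_zero fun h0 => by simp [h0] at hj
      have step : ∀ (t : Fin (sekronR a₁ a₂ 0))
          (s : ∀ l : Fin S, Fin (sekronR a₁ a₂ l.succ)),
          seqKron a₁ a₂ (fun k => Fin.cases
            (motive := fun k => (∀ l : Fin (S + 1), Fin (sekronR a₁ a₂ l)) →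
              Matrix (Fin (a₁ k)) (Fin (a₂ k)) ℝ)
            (fun r => sfac a₁ a₂ (r 0))
            (fun k' r => B (sdiv a₁ a₂ (r 0)) (smod a₁ a₂ (r 0)) k' (fun l => r l.succ)) k
            ((Fin.consEquiv fun l => Fin (sekronR a₁ a₂ l)) (t, s))) i j =
          (if (Fin.cast (Fin.prod_univ_succ a₁) i).divNat = sdiv a₁ a₂ t ∧
              (Fin.cast (Fin.prod_univ_succ a₂) j).divNat = smod a₁ a₂ t then (1 : ℝ) else 0) *
            seqKron (fun k => a₁ k.succ) (fun k => a₂ k.succ)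
              (fun k => B (sdiv a₁ a₂ t) (smod a₁ a₂ t) k s)
              (Fin.cast (Fin.prod_univ_succ a₁) i).modNat
              (Fin.cast (Fin.prod_univ_succ a₂) j).modNat := by
        intro t s
        rw [seqKron_succ_apply]
        simp only [Fin.consEquiv_apply, Fin.cons_zero, Fin.cons_succ,
          Fin.cases_zero, Fin.cases_succ, sfac]
      simp only [step]
      have hsum : ∀ (p : Fin (a₁ 0)) (q : Fin (a₂ 0)) (x : Fin m₁) (y : Fin m₂),
          ∑ s : ∀ l : Fin S, Fin (sekronR a₁ a₂ l.succ),
            seqKron (fun k => a₁ k.succ) (fun k => a₂ k.succ) (fun k => B p q k s) x y =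
            Wb p q x y := by
        intro p q x y
        rw [hBeq p q, Matrix.sum_apply]
        rfl
      rw [Finset.sum_congr rfl fun t _ => by rw [← Finset.mul_sum, hsum]]
      set di := (Fin.cast (Fin.prod_univ_succ a₁) i).divNat with hdi
      set dj := (Fin.cast (Fin.prod_univ_succ a₂) j).divNat with hdj
      set t₀ : Fin (sekronR a₁ a₂ 0) := ⟨di.val * a₂ 0 + dj.val, hb di dj⟩ with ht₀
      have e1 : sdiv a₁ a₂ t₀ = di := by
        apply Fin.ext
        show (di.val * a₂ 0 + dj.val) / a₂ 0 = di.val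
        rw [Nat.mul_comm, Nat.mul_add_div h2pos, Nat.div_eq_of_lt dj.isLt, Nat.add_zero]
      have e2 : smod a₁ a₂ t₀ = dj := by
        apply Fin.ext
        show (di.val * a₂ 0 + dj.val) % a₂ 0 = dj.val
        rw [Nat.mul_comm, Nat.mul_add_mod, Nat.mod_eq_of_lt dj.isLt]
      rw [Finset.sum_eq_single_of_mem t₀ (Finset.mem_univ _) ?hvanish]
      case hvanish =>
        intro b _ hbne
        rw [if_neg, zero_mul]
        rintro ⟨eb1, eb2⟩
        apply hbne
        apply Fin.ext
        have eb1' : di.val = b.val / a₂ 0 := congrArg Fin.val eb1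
        have eb2' : dj.val = b.val % a₂ 0 := congrArg Fin.val eb2
        show b.val = di.val * a₂ 0 + dj.val
        rw [eb1', eb2', Nat.div_add_mod']
      rw [e1, e2, if_pos ⟨rfl, rfl⟩, one_mul, hWb]
      show W i j = W _ _
      congr 1
      · apply Fin.ext
        show i.val = i.val / m₁ * m₁ + i.val % m₁
        exact (Nat.div_add_mod' _ _).symm
      · apply Fin.ext
        show j.val = j.val / m₂ * m₂ + j.val % m₂
        exact (Nat.div_add_mod' _ _).symm

/-- Exact SeKron representation (Theorem 1 of the paper, for matrices): any
`W ∈ ℝ^{w₁×w₂}` with `w₁ = ∏_k a₁^{(k)}`, `w₂ = ∏_k a₂^{(k)}` (here with `S+1` factors and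
`S` rank indices) can be written as a nested sum of sequences of Kronecker products,
where the `k`-th factor `A^{(k)}_{r₁⋯r_k}` depends only on the rank indices `r₁,…,r_k`
(the last factor depending on all of `r₁,…,r_S`, shared with the penultimate one).
Flattening the nested sums by multilinearity of `⊗`, this reads
`W = Σ_{r₁,…,r_S} A^{(1)}_{r₁} ⊗ A^{(2)}_{r₁r₂} ⊗ ⋯ ⊗ A^{(S+1)}_{r₁⋯r_S}`. -/
theorem exists_sekron_representation {S : ℕ} (a₁ a₂ : Fin (S + 1) → ℕ)
    (W : Matrix (Fin (∏ k, a₁ k)) (Fin (∏ k, a₂ k)) ℝ) :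
    ∃ (R : Fin S → ℕ)
      (A : ∀ k : Fin (S + 1), (∀ l : Fin S, Fin (R l)) →
        Matrix (Fin (a₁ k)) (Fin (a₂ k)) ℝ),
      (∀ (k : Fin (S + 1)) (r r' : ∀ l : Fin S, Fin (R l)),
        (∀ l : Fin S, (l : ℕ) ≤ (k : ℕ) → r l = r' l) → A k r = A k r') ∧
      W = ∑ r : ∀ l : Fin S, Fin (R l), seqKron a₁ a₂ (fun k => A k r) := by
  obtain ⟨A, hdep, heq⟩ := sekron_aux S a₁ a₂ W
  exact ⟨sekronR a₁ a₂, A, hdep, heq⟩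
end
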